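/- Let Γ be a finitely generated group and A a torsion-free abelian normal subgroup of Γ of finite index. Then A ∩ Z(Γ) ≠ {1}, where Z(Γ) is the center of Γ, if and only if there exists a surjective group homomorphism Γ → ℤ. -/

import Mathlib

/-- A nontrivial hom to `Multiplicative ℤ` yields a surjective one. -/
lemma aux_surj {G : Type*} [Group G] (F : G →* Multiplicative ℤ) (x : G) (hx : F x ≠ 1) :
    ∃ f : G →* Multiplicative ℤ, Function.Surjective f := by
  -- the range as an additive subgroup of ℤ
  let S : AddSubgroup ℤ :=
    { carrier := {n : ℤ | Multiplicative.ofAdd n ∈ F.range}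
      zero_mem' := ⟨1, by simp⟩
      add_mem' := by
        rintro p q ⟨y, hy⟩ ⟨z, hz⟩
        exact ⟨y * z, by simp [hy, hz, ofAdd_add]⟩
      neg_mem' := by
        rintro p ⟨y, hy⟩
        exact ⟨y⁻¹, by simp [hy]⟩ }
  obtain ⟨m, hm⟩ := Int.subgroup_cyclic S
  have hmem : ∀ y : G, ∃ k : ℤ, k * m = (F y).toAdd := by
    intro y
    have : (F y).toAdd ∈ S := ⟨y, by simp⟩
    rw [hm, AddSubgroup.mem_closure_singleton] at this
    obtain ⟨k, hk⟩ := this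
    exact ⟨k, by simpa [smul_eq_mul] using hk⟩
  have hm0 : m ≠ 0 := by
    rintro rfl
    obtain ⟨k, hk⟩ := hmem x
    apply hx
    have : (F x).toAdd = 0 := by omega
    simpa [toAdd_eq_zero] using this.symm ▸ rfl
  refine ⟨{ toFun := fun y => Multiplicative.ofAdd ((F y).toAdd / m)
            map_one' := by simp
            map_mul' := ?_ }, ?_⟩
  · intro y z
    obtain ⟨p, hp⟩ := hmem y
    obtain ⟨q, hq⟩ := hmem z
    have : (F (y * z)).toAdd = (p + q) * m := by
      rw [map_mul, toAdd_mul, ← hp, ← hq]; ring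
    simp only [this, ← hp, ← hq, ← ofAdd_add]
    congr 1
    rw [Int.mul_ediv_cancel _ hm0, Int.mul_ediv_cancel _ hm0, Int.mul_ediv_cancel _ hm0]
  · -- surjectivity: m itself is attained
    have : m ∈ S := by
      rw [hm]; exact AddSubgroup.mem_closure_singleton.mpr ⟨1, one_smul _ _⟩
    obtain ⟨y, hy⟩ := this
    intro n
    refine ⟨y ^ n.toAdd, ?_⟩
    have : (F (y ^ n.toAdd)).toAdd = n.toAdd * m := by
      rw [map_zpow, toAdd_zpow, hy]
      simp [smul_eq_mul, mul_comm]
    simp only [MonoidHom.coe_mk, OneHom.coe_mk, this, Int.mul_ediv_cancel _ hm0]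
    simp

theorem stmt14 {Γ : Type*} [Group Γ] [Group.FG Γ] (A : Subgroup Γ) [A.Normal]
    (hA : ∀ a b : Γ, a ∈ A → b ∈ A → a * b = b * a)
    (htf : ∀ a : Γ, a ∈ A → a ≠ 1 → ¬IsOfFinOrder a)
    [A.FiniteIndex] :
    A ⊓ Subgroup.center Γ ≠ ⊥ ↔ ∃ f : Γ →* Multiplicative ℤ, Function.Surjective f := by
  letI : CommGroup A := { (inferInstance : Group A) with mul_comm := fun a b => Subtype.ext (hA a b a.2 b.2) }
  constructor
  · intro h
    obtain ⟨z, hz1⟩ := Subgroup.ne_bot_iff_exists_ne_one.mp h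
    have hzA : (z : Γ) ∈ A := z.2.1
    have hzC : (z : Γ) ∈ Subgroup.center Γ := z.2.2
    have hzne : (z : Γ) ≠ 1 := fun h1 => hz1 (by ext; simpa using h1)
    -- the transfer homomorphism Γ → A
    let T : Γ →* ↥A := MonoidHom.transfer (MonoidHom.id ↥A)
    have key : ∀ (k : ℕ) (g₀ : Γ), g₀⁻¹ * (z:Γ) ^ k * g₀ ∈ A → g₀⁻¹ * (z:Γ) ^ k * g₀ = (z:Γ) ^ k := by
      intro k g₀ _
      have : (z:Γ) ^ k ∈ Subgroup.center Γ := pow_mem hzC k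
      rw [Subgroup.mem_center_iff] at this
      rw [mul_assoc, ← this g₀, ← mul_assoc, inv_mul_cancel, one_mul]
    have hTz : T (z : Γ) = ⟨(z:Γ) ^ A.index, MonoidHom.transfer_eq_pow_aux (z:Γ) key⟩ :=
      MonoidHom.transfer_eq_pow (MonoidHom.id ↥A) (z:Γ) key
    have hTzne : T (z : Γ) ≠ 1 := by
      rw [hTz]
      intro h1
      have hpow : (z:Γ) ^ A.index = 1 := by simpa [Subtype.ext_iff] using h1
      exact htf (z:Γ) hzA hzne
        (isOfFinOrder_iff_pow_eq_one.mpr ⟨A.index, Nat.pos_of_ne_zero Subgroup.FiniteIndex.index_ne_zero, hpow⟩)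
    -- A is f.g. torsion-free abelian, hence free; get a coordinate functional
    haveI : Group.FG ↥A := A.fg_of_index_ne_zero
    haveI : Module.Finite ℤ (Additive ↥A) := Module.Finite.iff_addGroup_fg.mpr inferInstance
    haveI : Module.IsTorsionFree ℤ (Additive ↥A) := by
      rw [Module.isTorsionFree_int_iff_isAddTorsionFree, isAddTorsionFree_iff_not_isOfFinAddOrder]
      intro g hg hfo
      have : IsOfFinOrder (Additive.toMul g) := hfo
      rw [← Submonoid.isOfFinOrder_coe] at this
      refine htf _ (Additive.toMul g).2 ?_ this
      intro h1
      exact hg (by simpa [Subtype.ext_iff] using h1)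
    haveI : Module.Free ℤ (Additive ↥A) := Module.free_of_finite_type_torsion_free'
    let b := Module.Free.chooseBasis ℤ (Additive ↥A)
    have hmne : (Additive.ofMul (T (z:Γ)) : Additive ↥A) ≠ 0 := hTzne
    have : b.repr (Additive.ofMul (T (z:Γ))) ≠ 0 := fun h0 => hmne (by
      have := b.repr.injective (a₁ := Additive.ofMul (T (z:Γ))) (a₂ := 0) (by simp [h0])
      simpa using this)
    obtain ⟨i, hi⟩ := Finsupp.ne_iff.mp this
    let ψ : ↥A →* Multiplicative ℤ :=
      { toFun := fun a => Multiplicative.ofAdd (b.coord i (Additive.ofMul a))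
        map_one' := by simp
        map_mul' := fun a c => by
          simp only [← ofAdd_add]
          congr 1
          exact map_add (b.coord i) (Additive.ofMul a) (Additive.ofMul c) }
    refine aux_surj (ψ.comp T) (z:Γ) ?_
    simp only [MonoidHom.comp_apply, MonoidHom.coe_mk, OneHom.coe_mk, ψ]
    intro h1
    apply hi
    simpa [Module.Basis.coord_apply, toAdd_eq_zero] using h1
  · rintro ⟨f, hf⟩
    -- find a ∈ A with f a ≠ 1
    obtain ⟨a, ha, hfa⟩ : ∃ a ∈ A, f a ≠ 1 := by
      by_contra hc
      push_neg at hc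
      have hle : A ≤ f.ker := fun g hg => hc g hg
      haveI := Subgroup.finiteIndex_of_le hle
      have h1 : f.ker.index = Nat.card ↥f.range := Subgroup.index_ker f
      have h2 : f.range = ⊤ := MonoidHom.range_eq_top.mpr hf
      rw [h2] at h1
      have : Nat.card ↥(⊤ : Subgroup (Multiplicative ℤ)) = 0 := by
        rw [Nat.card_eq_zero]
        right
        exact Set.infinite_coe_iff.mpr (by simpa using Set.infinite_univ (α := Multiplicative ℤ))
      rw [this] at h1
      exact Subgroup.FiniteIndex.index_ne_zero h1
    letI : Fintype (Γ ⧸ A) := A.fintypeQuotientOfFiniteIndex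
    have hnorm : ∀ g : Γ, g * a * g⁻¹ ∈ A := fun g => ‹A.Normal›.conj_mem a ha g
    -- the "norm" element: product of all conjugates of a
    let c : Γ ⧸ A → ↥A := Quotient.lift (fun g : Γ => (⟨g * a * g⁻¹, hnorm g⟩ : ↥A)) (by
      intro g₁ g₂ hg
      have hmem : g₁⁻¹ * g₂ ∈ A := QuotientGroup.leftRel_apply.mp hg
      have hcomm : (g₁⁻¹ * g₂) * a * (g₁⁻¹ * g₂)⁻¹ = a := by
        rw [hA _ a hmem ha]; group
      ext
      show g₁ * a * g₁⁻¹ = g₂ * a * g₂⁻¹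
      calc g₁ * a * g₁⁻¹ = g₁ * ((g₁⁻¹ * g₂) * a * (g₁⁻¹ * g₂)⁻¹) * g₁⁻¹ := by rw [hcomm]
        _ = g₂ * a * g₂⁻¹ := by group)
    have hc_mk : ∀ g : Γ, (c (QuotientGroup.mk g) : Γ) = g * a * g⁻¹ := fun g => rfl
    let bb : ↥A := ∏ q : Γ ⧸ A, c q
    -- bb is central
    have hconj : ∀ (x : Γ) (q : Γ ⧸ A), (c (x • q) : Γ) = x * (c q) * x⁻¹ := by
      intro x q
      induction q using Quotient.inductionOn with
      | h g =>
        show (c (QuotientGroup.mk (x * g)) : Γ) = _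
        rw [hc_mk, hc_mk]
        group
    have hbbC : (bb : Γ) ∈ Subgroup.center Γ := by
      rw [Subgroup.mem_center_iff]
      intro x
      let φ : ↥A →* ↥A :=
        ((MulAut.conj x).toMonoidHom.domRestrict A).codRestrict A
          (fun g => by simpa [MulAut.conj_apply] using ‹A.Normal›.conj_mem g.1 g.2 x)
      have hφ : ∀ q, φ (c q) = c (x • q) := by
        intro q
        ext
        rw [hconj]
        rfl
      have : φ bb = bb := by
        rw [map_prod]
        calc ∏ q : Γ ⧸ A, φ (c q) = ∏ q : Γ ⧸ A, c (x • q) := by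
              exact Finset.prod_congr rfl fun q _ => hφ q
          _ = ∏ q : Γ ⧸ A, c (MulAction.toPerm x q) := rfl
          _ = ∏ q : Γ ⧸ A, c q := Equiv.prod_comp (MulAction.toPerm x) c
      have hcoe : x * (bb : Γ) * x⁻¹ = (bb : Γ) := by
        conv_rhs => rw [← this]
        rfl
      calc x * (bb : Γ) = (x * bb * x⁻¹) * x := by group
        _ = (bb : Γ) * x := by rw [hcoe]
    -- bb is nontrivial
    have hbbne : (bb : Γ) ≠ 1 := by
      intro h1
      have hFb : f (bb : Γ) = (f a) ^ Fintype.card (Γ ⧸ A) := by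
        have : f (bb : Γ) = ∏ q : Γ ⧸ A, f ((c q : Γ)) :=
          map_prod (f.comp A.subtype) c Finset.univ
        rw [this]
        have hone : ∀ q : Γ ⧸ A, f ((c q : Γ)) = f a := by
          intro q
          induction q using Quotient.inductionOn with
          | h g =>
            rw [hc_mk, map_mul, map_mul, map_inv, mul_comm (f g) (f a), mul_inv_cancel_right]
        rw [Finset.prod_congr rfl fun q _ => hone q, Finset.prod_const, Finset.card_univ]
      rw [h1, map_one] at hFb
      have hcard : Fintype.card (Γ ⧸ A) ≠ 0 := Fintype.card_ne_zero
      have : ((f a) ^ Fintype.card (Γ ⧸ A)).toAdd = 0 := by rw [← hFb]; simp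
      rw [toAdd_pow] at this
      have hfa' : (f a).toAdd ≠ 0 := fun h => hfa (toAdd_eq_zero.mp h)
      rw [nsmul_eq_mul] at this
      exact hfa' (by
        rcases mul_eq_zero.mp this with h | h
        · exact absurd (by exact_mod_cast h) hcard
        · exact h)
    rw [Subgroup.ne_bot_iff_exists_ne_one]
    refine ⟨⟨(bb : Γ), ⟨bb.2, hbbC⟩⟩, ?_⟩
    intro h1
    exact hbbne (congrArg Subtype.val h1)
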